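/- Every (δ,s,n)-net in base p^e is a (δ', es, n)-net in base p, where δ' = eδ + (e-1)(n-1). -/

import Mathlib

/-- The number of points of `D` in the elementary box
`Π_j [m_j / b^{a_j}, (m_j + 1) / b^{a_j})`. -/
noncomputable def boxCount {n : ℕ} (b : ℕ) (D : Finset (Fin n → ℝ))
    (A m : Fin n → ℕ) : ℕ :=
  (D.filter fun X => ∀ j, (m j : ℝ) / (b : ℝ) ^ (A j) ≤ X j ∧
    X j < ((m j : ℝ) + 1) / (b : ℝ) ^ (A j)).card

/-- `D` is a `(δ,s,n)`-net in base `b`: `D` consists of `b^s` points of `[0,1)^n`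
and every elementary box of volume `b^{δ-s}` contains exactly `b^δ` points of `D`. -/
def IsNet {n : ℕ} (b δ s : ℕ) (D : Finset (Fin n → ℝ)) : Prop :=
  δ ≤ s ∧ D.card = b ^ s ∧ (∀ X ∈ D, ∀ j, 0 ≤ X j ∧ X j < 1) ∧
    ∀ A m : Fin n → ℕ, (∑ j, A j) + δ = s → (∀ j, m j < b ^ (A j)) →
      boxCount b D A m = b ^ δ

lemma mem_box_floor (B : ℝ) (hB : 0 < B) (a : ℕ) (x : ℝ) :
    ((a : ℝ) / B ≤ x ∧ x < ((a : ℝ) + 1) / B) ↔ (0 ≤ x ∧ ⌊x * B⌋₊ = a) := by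
  rw [div_le_iff₀ hB, lt_div_iff₀ hB]
  constructor
  · rintro ⟨h1, h2⟩
    have hx : 0 ≤ x := by
      by_contra h
      push_neg at h
      nlinarith [Nat.cast_nonneg (α := ℝ) a]
    refine ⟨hx, ?_⟩
    rw [Nat.floor_eq_iff (by positivity)]
    exact ⟨h1, h2⟩
  · rintro ⟨hx, hfl⟩
    have := (Nat.floor_eq_iff (R := ℝ) (n := a) (by positivity : (0:ℝ) ≤ x * B)).mp hfl
    exact ⟨this.1, this.2⟩

lemma mem_box_floor' {p : ℕ} (hp : 0 < p) (Aj cj mj : ℕ) (hAc : Aj ≤ cj) (x : ℝ) :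
    ((mj : ℝ) / (p : ℝ) ^ Aj ≤ x ∧ x < ((mj : ℝ) + 1) / (p : ℝ) ^ Aj) ↔
    (0 ≤ x ∧ mj * p ^ (cj - Aj) ≤ ⌊x * (p : ℝ) ^ cj⌋₊ ∧
      ⌊x * (p : ℝ) ^ cj⌋₊ < (mj + 1) * p ^ (cj - Aj)) := by
  have hp0 : (0:ℝ) < (p:ℝ) ^ Aj := by positivity
  have hc0 : (0:ℝ) < (p:ℝ) ^ cj := by positivity
  have ht0 : (0:ℝ) < (p:ℝ) ^ (cj - Aj) := by positivity
  have key : (p:ℝ) ^ Aj * (p:ℝ) ^ (cj - Aj) = (p:ℝ) ^ cj := by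
    rw [← pow_add]; congr 1; omega
  constructor
  · rintro ⟨h1, h2⟩
    rw [div_le_iff₀ hp0] at h1
    rw [lt_div_iff₀ hp0] at h2
    have hx : 0 ≤ x := by
      by_contra h
      push_neg at h
      nlinarith [Nat.cast_nonneg (α := ℝ) mj]
    have hxc : (0:ℝ) ≤ x * (p:ℝ) ^ cj := by positivity
    refine ⟨hx, ?_, ?_⟩
    · rw [Nat.le_floor_iff hxc]
      push_cast
      calc ((mj:ℝ)) * (p:ℝ) ^ (cj - Aj) ≤ (x * (p:ℝ)^Aj) * (p:ℝ) ^ (cj - Aj) := by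
            apply mul_le_mul_of_nonneg_right h1 (le_of_lt ht0)
        _ = x * (p:ℝ) ^ cj := by rw [mul_assoc, key]
    · rw [Nat.floor_lt hxc]
      push_cast
      calc x * (p:ℝ) ^ cj = (x * (p:ℝ)^Aj) * (p:ℝ) ^ (cj - Aj) := by rw [mul_assoc, key]
        _ < ((mj:ℝ)+1) * (p:ℝ) ^ (cj - Aj) := by
            apply mul_lt_mul_of_pos_right h2 ht0
  · rintro ⟨hx, h1, h2⟩
    have hxc : (0:ℝ) ≤ x * (p:ℝ) ^ cj := by positivity
    rw [Nat.le_floor_iff hxc] at h1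
    rw [Nat.floor_lt hxc] at h2
    push_cast at h1 h2
    constructor
    · rw [div_le_iff₀ hp0]
      have := h1
      rw [← key, ← mul_assoc] at this
      exact le_of_mul_le_mul_right this ht0
    · rw [lt_div_iff₀ hp0]
      have := h2
      rw [← key, ← mul_assoc] at this
      exact lt_of_mul_lt_mul_right this (le_of_lt ht0)

lemma boxCount_split {n p : ℕ} (hp : 0 < p) (D : Finset (Fin n → ℝ))
    (A c m : Fin n → ℕ) (hAc : ∀ j, A j ≤ c j) :
    boxCount p D A m = ∑ k ∈ Fintype.piFinset (fun j => Finset.range (p ^ (c j - A j))),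
      boxCount p D c (fun j => m j * p ^ (c j - A j) + k j) := by
  classical
  unfold boxCount
  rw [Finset.card_eq_sum_card_fiberwise
    (f := fun X (j : Fin n) => ⌊X j * (p:ℝ) ^ (c j)⌋₊ - m j * p ^ (c j - A j))
    (t := Fintype.piFinset (fun j => Finset.range (p ^ (c j - A j))))]
  · apply Finset.sum_congr rfl
    intro k hk
    rw [Finset.filter_filter]
    congr 1
    apply Finset.filter_congr
    intro X _
    simp only [Fintype.mem_piFinset, Finset.mem_range] at hk
    simp only [funext_iff]
    rw [← forall_and]
    constructor
    · intro h j
      obtain ⟨h1, h2⟩ := h j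
      rw [mem_box_floor' hp (A j) (c j) (m j) (hAc j)] at h1
      rw [mem_box_floor ((p:ℝ) ^ (c j)) (by positivity)]
      obtain ⟨hx, hl, hr⟩ := h1
      refine ⟨hx, ?_⟩
      have he : (m j + 1) * p ^ (c j - A j) = m j * p ^ (c j - A j) + p ^ (c j - A j) := by ring
      omega
    · intro h j
      have hj := h j
      rw [mem_box_floor ((p:ℝ) ^ (c j)) (by positivity)] at hj
      obtain ⟨hx, hfl⟩ := hj
      have hkj := hk j
      have he : (m j + 1) * p ^ (c j - A j) = m j * p ^ (c j - A j) + p ^ (c j - A j) := by ring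
      constructor
      · rw [mem_box_floor' hp (A j) (c j) (m j) (hAc j)]
        exact ⟨hx, by omega, by omega⟩
      · omega
  · intro X hX
    simp only [Finset.mem_coe, Finset.mem_filter] at hX
    simp only [Finset.mem_coe, Fintype.mem_piFinset, Finset.mem_range]
    intro j
    have := (mem_box_floor' hp (A j) (c j) (m j) (hAc j) (X j)).mp (hX.2 j)
    have he : (m j + 1) * p ^ (c j - A j) = m j * p ^ (c j - A j) + p ^ (c j - A j) := by ring
    omega

lemma boxCount_base {n : ℕ} (p e : ℕ) (D : Finset (Fin n → ℝ)) (a m : Fin n → ℕ) :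
    boxCount p D (fun j => e * a j) m = boxCount (p ^ e) D a m := by
  unfold boxCount
  congr 1
  apply Finset.filter_congr
  intro X _
  have h : ∀ j : Fin n, (p : ℝ) ^ (e * a j) = ((p ^ e : ℕ) : ℝ) ^ (a j) := by
    intro j; push_cast; rw [pow_mul]
  simp only [h]

theorem net_base_reduction {n p e δ s : ℕ} (hp : p.Prime) (he : 1 ≤ e)
    (D : Finset (Fin n → ℝ)) (hD : IsNet (p ^ e) δ s D)
    (hδ' : e * δ + (e - 1) * (n - 1) ≤ e * s) :
    IsNet p (e * δ + (e - 1) * (n - 1)) (e * s) D := by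
  obtain ⟨hδs, hcard, hmem, hbox⟩ := hD
  have hp1 : 0 < p := hp.pos
  refine ⟨hδ', by rw [hcard, ← pow_mul], hmem, ?_⟩
  intro A m hsum hm
  rcases Nat.eq_zero_or_pos n with hn | hn
  · -- n = 0 : the box is everything
    subst hn
    simp only [Finset.univ_eq_empty, Finset.sum_empty, zero_add] at hsum
    unfold boxCount
    rw [Finset.filter_true_of_mem (fun X _ => fun j => j.elim0)]
    rw [hcard, ← pow_mul, hsum]
  · -- n ≥ 1
    -- round exponents up to multiples of e
    set a : Fin n → ℕ := fun j => if A j = 0 then 0 else (A j - 1) / e + 1 with ha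
    have hAa : ∀ j, A j ≤ e * a j := by
      intro j
      by_cases h0 : A j = 0
      · simp [ha, h0]
      · simp only [ha, h0, if_false]
        have hd := Nat.div_add_mod (A j - 1) e
        have he2 : e * ((A j - 1) / e + 1) = e * ((A j - 1) / e) + e := by ring
        have hmod : (A j - 1) % e < e := Nat.mod_lt _ he
        omega
    have haA : ∀ j, e * a j ≤ A j + (e - 1) := by
      intro j
      by_cases h0 : A j = 0
      · simp [ha, h0]
      · simp only [ha, h0, if_false]
        have hd := Nat.div_add_mod (A j - 1) e
        have he2 : e * ((A j - 1) / e + 1) = e * ((A j - 1) / e) + e := by ring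
        omega
    -- Sa + δ ≤ s
    have h1 : e * (∑ j, a j) ≤ (∑ j, A j) + n * (e - 1) := by
      rw [Finset.mul_sum]
      calc (∑ j, e * a j) ≤ ∑ j : Fin n, (A j + (e - 1)) := Finset.sum_le_sum fun j _ => haA j
        _ = (∑ j, A j) + n * (e - 1) := by
            rw [Finset.sum_add_distrib, Finset.sum_const, Finset.card_univ, Fintype.card_fin,
              smul_eq_mul]
    have hnn : n * (e - 1) = (e - 1) * (n - 1) + (e - 1) := by
      obtain ⟨n', rfl⟩ := Nat.exists_eq_add_of_lt hn
      simp only [Nat.add_sub_cancel]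
      ring_nf
    have hSaδ : (∑ j, a j) + δ ≤ s := by
      have h3 : e * ((∑ j, a j) + δ) < e * (s + 1) := by
        have e1 : e * ((∑ j, a j) + δ) = e * (∑ j, a j) + e * δ := by ring
        have e2 : e * (s + 1) = e * s + e := by ring
        have e3 : 1 ≤ e := he
        have e4 : e - 1 + 1 = e := by omega
        -- linear arithmetic over atoms
        nlinarith [h1, hnn, hsum]
      have := Nat.lt_of_mul_lt_mul_left h3
      omega
    set t : ℕ := s - (δ + ∑ j, a j) with htdef
    set j0 : Fin n := ⟨0, hn⟩ with hj0
    set a' : Fin n → ℕ := fun j => a j + (if j = j0 then t else 0) with ha'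
    have hSa' : (∑ j, a' j) = (∑ j, a j) + t := by
      simp only [ha', Finset.sum_add_distrib]
      congr 1
      rw [Finset.sum_ite_eq' Finset.univ j0 (fun _ => t)]
      simp
    have hsum' : (∑ j, a' j) + δ = s := by rw [hSa']; omega
    set c : Fin n → ℕ := fun j => e * a' j with hc
    have hAc : ∀ j, A j ≤ c j := by
      intro j
      calc A j ≤ e * a j := hAa j
        _ ≤ e * a' j := by apply Nat.mul_le_mul_left; simp [ha']
    rw [boxCount_split hp1 D A c m hAc]
    have hterm : ∀ k ∈ Fintype.piFinset (fun j => Finset.range (p ^ (c j - A j))),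
        boxCount p D c (fun j => m j * p ^ (c j - A j) + k j) = (p ^ e) ^ δ := by
      intro k hk
      rw [hc, boxCount_base]
      apply hbox a' _ hsum'
      intro j
      simp only [Fintype.mem_piFinset, Finset.mem_range] at hk
      have hpc : (p ^ e) ^ (a' j) = p ^ (c j) := by rw [← pow_mul]
      have hsplit : p ^ (A j) * p ^ (c j - A j) = p ^ (c j) := by
        rw [← pow_add]; congr 1; have := hAc j; omega
      have hm' := hm j
      have hk' := hk j
      calc m j * p ^ (c j - A j) + k j < m j * p ^ (c j - A j) + p ^ (c j - A j) := by omega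
        _ = (m j + 1) * p ^ (c j - A j) := by ring
        _ ≤ p ^ (A j) * p ^ (c j - A j) := Nat.mul_le_mul_right _ hm'
        _ = (p ^ e) ^ (a' j) := by rw [hsplit, hpc]
    rw [Finset.sum_congr rfl hterm, Finset.sum_const, smul_eq_mul]
    have hkey : (∑ j, (c j - A j)) + (∑ j, A j) = ∑ j, c j := by
      rw [← Finset.sum_add_distrib]
      apply Finset.sum_congr rfl
      intro j _
      have := hAc j
      omega
    have h5 : (∑ j, c j) + e * δ = e * s := by
      have hSc : (∑ j, c j) = e * ((∑ j, a j) + t) := by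
        simp only [hc]
        rw [← Finset.mul_sum, hSa']
      rw [hSc]
      have e1 : e * ((∑ j, a j) + t) + e * δ = e * ((∑ j, a j) + t + δ) := by ring
      rw [e1]
      have e2 : (∑ j, a j) + t + δ = s := by omega
      rw [e2]
    rw [Fintype.card_piFinset]
    simp only [Finset.card_range]
    rw [Finset.prod_pow_eq_pow_sum]
    rw [show ((p : ℕ) ^ e) ^ δ = p ^ (e * δ) from by rw [← pow_mul], ← pow_add]
    congr 1
    linarith [hkey, h5, hsum]
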